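/- Let θᵢ = e^{(lᵢ − lⱼ − lₖ)/2}, xᵢ = (θⱼ+θₖ−θᵢ)/2, and uᵢ = ∫₀^{lᵢ} e^{−h e^{−t}} dt for a fixed h ∈ ℝ. Then the 3×3 matrix H = [∂μ(xᵢ)/∂uⱼ], where μ(x) = ∫₀^{x} e^{h t²} dt, is symmetric. -/

import Mathlib

/-- The generalized angle opposite the `i`-th edge: `θᵢ = exp((lᵢ - lⱼ - lₖ)/2)`. -/
noncomputable def thetaF (l : Fin 3 → ℝ) (i : Fin 3) : ℝ :=
  Real.exp (l i - (l 0 + l 1 + l 2) / 2)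

/-- The x-invariant `xᵢ = (θⱼ + θₖ - θᵢ)/2`. -/
noncomputable def xF (l : Fin 3 → ℝ) (i : Fin 3) : ℝ :=
  (thetaF l 0 + thetaF l 1 + thetaF l 2) / 2 - thetaF l i

/-- `μ(x) = ∫₀ˣ e^{h t²} dt`. -/
noncomputable def mu (h x : ℝ) : ℝ := ∫ t in (0:ℝ)..x, Real.exp (h * t ^ 2)

/-- The matrix `H = [∂μ(xᵢ)/∂uⱼ]` expressed via the chain rule, using
`duⱼ/dlⱼ = e^{-h e^{-lⱼ}}`. -/
noncomputable def Hmat (h : ℝ) (l : Fin 3 → ℝ) (i j : Fin 3) : ℝ :=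
  deriv (fun s => mu h (xF (Function.update l j s) i)) (l j) /
    Real.exp (-h * Real.exp (-l j))

lemma mu_hasDerivAt (h x : ℝ) : HasDerivAt (mu h) (Real.exp (h * x ^ 2)) x := by
  have hc : Continuous fun t : ℝ => Real.exp (h * t ^ 2) := by continuity
  exact (hc.integral_hasStrictDerivAt 0 x).hasDerivAt

lemma Hval (h : ℝ) (l : Fin 3 → ℝ) (i j : Fin 3) (D : ℝ)
    (dx : HasDerivAt (fun s => xF (Function.update l j s) i) D (l j)) :
    Hmat h l i j = D * Real.exp (h * xF l i ^ 2 + h * Real.exp (-l j)) := by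
  have hmu : HasDerivAt (mu h) (Real.exp (h * xF l i ^ 2))
      (xF (Function.update l j (l j)) i) := by
    rw [Function.update_eq_self]; exact mu_hasDerivAt h _
  have hcomp := hmu.comp (l j) dx
  have hd : deriv (fun s => mu h (xF (Function.update l j s) i)) (l j)
      = Real.exp (h * xF l i ^ 2) * D := hcomp.deriv
  rw [Hmat, hd, show (-h * Real.exp (-l j)) = -(h * Real.exp (-l j)) by ring,
    Real.exp_neg, Real.exp_add]
  field_simp

/- The six off-diagonal derivative computations.  `dxIJ` computes the derivative of
`s ↦ xF (update l J s) I` at `l J`. -/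

lemma dx10 (l : Fin 3 → ℝ) :
    HasDerivAt (fun s => xF (Function.update l 0 s) (1:Fin 3))
      ((2 * thetaF l 1 + 2 * thetaF l 0 - (thetaF l 0 + thetaF l 1 + thetaF l 2)) / 4) (l 0) := by
  have hs : HasDerivAt (fun s : ℝ => (s + l 1 + l 2) / 2) (1 / 2) (l 0) := by
    simpa using (((hasDerivAt_id (l 0)).add_const (l 1)).add_const (l 2)).div_const 2
  have hA := ((hasDerivAt_id (l 0)).fun_sub hs).exp
  have hB := (hs.const_sub (l 1)).exp
  have hC := (hs.const_sub (l 2)).exp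
  have E : (fun s => xF (Function.update l 0 s) (1:Fin 3)) = fun s =>
      (Real.exp (s - (s + l 1 + l 2) / 2) + Real.exp (l 1 - (s + l 1 + l 2) / 2) +
        Real.exp (l 2 - (s + l 1 + l 2) / 2)) / 2 - Real.exp (l 1 - (s + l 1 + l 2) / 2) := by
    funext s; simp [xF, thetaF, Function.update]
  rw [E]
  refine ((((hA.fun_add hB).fun_add hC).div_const 2).fun_sub hB).congr_deriv ?_
  simp only [thetaF, id_eq]
  ring

lemma dx20 (l : Fin 3 → ℝ) :
    HasDerivAt (fun s => xF (Function.update l 0 s) (2:Fin 3))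
      ((2 * thetaF l 2 + 2 * thetaF l 0 - (thetaF l 0 + thetaF l 1 + thetaF l 2)) / 4) (l 0) := by
  have hs : HasDerivAt (fun s : ℝ => (s + l 1 + l 2) / 2) (1 / 2) (l 0) := by
    simpa using (((hasDerivAt_id (l 0)).add_const (l 1)).add_const (l 2)).div_const 2
  have hA := ((hasDerivAt_id (l 0)).fun_sub hs).exp
  have hB := (hs.const_sub (l 1)).exp
  have hC := (hs.const_sub (l 2)).exp
  have E : (fun s => xF (Function.update l 0 s) (2:Fin 3)) = fun s =>
      (Real.exp (s - (s + l 1 + l 2) / 2) + Real.exp (l 1 - (s + l 1 + l 2) / 2) +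
        Real.exp (l 2 - (s + l 1 + l 2) / 2)) / 2 - Real.exp (l 2 - (s + l 1 + l 2) / 2) := by
    funext s; simp [xF, thetaF, Function.update]
  rw [E]
  refine ((((hA.fun_add hB).fun_add hC).div_const 2).fun_sub hC).congr_deriv ?_
  simp only [thetaF, id_eq]
  ring

lemma dx01 (l : Fin 3 → ℝ) :
    HasDerivAt (fun s => xF (Function.update l 1 s) (0:Fin 3))
      ((2 * thetaF l 0 + 2 * thetaF l 1 - (thetaF l 0 + thetaF l 1 + thetaF l 2)) / 4) (l 1) := by
  have hs : HasDerivAt (fun s : ℝ => (l 0 + s + l 2) / 2) (1 / 2) (l 1) := by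
    simpa using (((hasDerivAt_id (l 1)).const_add (l 0)).add_const (l 2)).div_const 2
  have hA := (hs.const_sub (l 0)).exp
  have hB := ((hasDerivAt_id (l 1)).fun_sub hs).exp
  have hC := (hs.const_sub (l 2)).exp
  have E : (fun s => xF (Function.update l 1 s) (0:Fin 3)) = fun s =>
      (Real.exp (l 0 - (l 0 + s + l 2) / 2) + Real.exp (s - (l 0 + s + l 2) / 2) +
        Real.exp (l 2 - (l 0 + s + l 2) / 2)) / 2 - Real.exp (l 0 - (l 0 + s + l 2) / 2) := by
    funext s; simp [xF, thetaF, Function.update]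
  rw [E]
  refine ((((hA.fun_add hB).fun_add hC).div_const 2).fun_sub hA).congr_deriv ?_
  simp only [thetaF, id_eq]
  ring

lemma dx21 (l : Fin 3 → ℝ) :
    HasDerivAt (fun s => xF (Function.update l 1 s) (2:Fin 3))
      ((2 * thetaF l 2 + 2 * thetaF l 1 - (thetaF l 0 + thetaF l 1 + thetaF l 2)) / 4) (l 1) := by
  have hs : HasDerivAt (fun s : ℝ => (l 0 + s + l 2) / 2) (1 / 2) (l 1) := by
    simpa using (((hasDerivAt_id (l 1)).const_add (l 0)).add_const (l 2)).div_const 2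
  have hA := (hs.const_sub (l 0)).exp
  have hB := ((hasDerivAt_id (l 1)).fun_sub hs).exp
  have hC := (hs.const_sub (l 2)).exp
  have E : (fun s => xF (Function.update l 1 s) (2:Fin 3)) = fun s =>
      (Real.exp (l 0 - (l 0 + s + l 2) / 2) + Real.exp (s - (l 0 + s + l 2) / 2) +
        Real.exp (l 2 - (l 0 + s + l 2) / 2)) / 2 - Real.exp (l 2 - (l 0 + s + l 2) / 2) := by
    funext s; simp [xF, thetaF, Function.update]
  rw [E]
  refine ((((hA.fun_add hB).fun_add hC).div_const 2).fun_sub hC).congr_deriv ?_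
  simp only [thetaF, id_eq]
  ring

lemma dx02 (l : Fin 3 → ℝ) :
    HasDerivAt (fun s => xF (Function.update l 2 s) (0:Fin 3))
      ((2 * thetaF l 0 + 2 * thetaF l 2 - (thetaF l 0 + thetaF l 1 + thetaF l 2)) / 4) (l 2) := by
  have hs : HasDerivAt (fun s : ℝ => (l 0 + l 1 + s) / 2) (1 / 2) (l 2) := by
    simpa using ((hasDerivAt_id (l 2)).const_add (l 0 + l 1)).div_const 2
  have hA := (hs.const_sub (l 0)).exp
  have hB := (hs.const_sub (l 1)).exp
  have hC := ((hasDerivAt_id (l 2)).fun_sub hs).exp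
  have E : (fun s => xF (Function.update l 2 s) (0:Fin 3)) = fun s =>
      (Real.exp (l 0 - (l 0 + l 1 + s) / 2) + Real.exp (l 1 - (l 0 + l 1 + s) / 2) +
        Real.exp (s - (l 0 + l 1 + s) / 2)) / 2 - Real.exp (l 0 - (l 0 + l 1 + s) / 2) := by
    funext s; simp [xF, thetaF, Function.update]
  rw [E]
  refine ((((hA.fun_add hB).fun_add hC).div_const 2).fun_sub hA).congr_deriv ?_
  simp only [thetaF, id_eq]
  ring

lemma dx12 (l : Fin 3 → ℝ) :
    HasDerivAt (fun s => xF (Function.update l 2 s) (1:Fin 3))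
      ((2 * thetaF l 1 + 2 * thetaF l 2 - (thetaF l 0 + thetaF l 1 + thetaF l 2)) / 4) (l 2) := by
  have hs : HasDerivAt (fun s : ℝ => (l 0 + l 1 + s) / 2) (1 / 2) (l 2) := by
    simpa using ((hasDerivAt_id (l 2)).const_add (l 0 + l 1)).div_const 2
  have hA := (hs.const_sub (l 0)).exp
  have hB := (hs.const_sub (l 1)).exp
  have hC := ((hasDerivAt_id (l 2)).fun_sub hs).exp
  have E : (fun s => xF (Function.update l 2 s) (1:Fin 3)) = fun s =>
      (Real.exp (l 0 - (l 0 + l 1 + s) / 2) + Real.exp (l 1 - (l 0 + l 1 + s) / 2) +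
        Real.exp (s - (l 0 + l 1 + s) / 2)) / 2 - Real.exp (l 1 - (l 0 + l 1 + s) / 2) := by
    funext s; simp [xF, thetaF, Function.update]
  rw [E]
  refine ((((hA.fun_add hB).fun_add hC).div_const 2).fun_sub hB).congr_deriv ?_
  simp only [thetaF, id_eq]
  ring

/- The key symmetry of the exponents: `xᵢ² + e^{-lⱼ} = xⱼ² + e^{-lᵢ}`. -/

lemma es01 (l : Fin 3 → ℝ) :
    xF l 0 ^ 2 + Real.exp (-l 1) = xF l 1 ^ 2 + Real.exp (-l 0) := by
  have e1 : Real.exp (-l 1) = Real.exp (l 0 - (l 0 + l 1 + l 2) / 2) *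
      Real.exp (l 2 - (l 0 + l 1 + l 2) / 2) := by rw [← Real.exp_add]; congr 1; ring
  have e0 : Real.exp (-l 0) = Real.exp (l 1 - (l 0 + l 1 + l 2) / 2) *
      Real.exp (l 2 - (l 0 + l 1 + l 2) / 2) := by rw [← Real.exp_add]; congr 1; ring
  rw [e1, e0]; simp only [xF, thetaF]; ring

lemma es02 (l : Fin 3 → ℝ) :
    xF l 0 ^ 2 + Real.exp (-l 2) = xF l 2 ^ 2 + Real.exp (-l 0) := by
  have e2 : Real.exp (-l 2) = Real.exp (l 0 - (l 0 + l 1 + l 2) / 2) *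
      Real.exp (l 1 - (l 0 + l 1 + l 2) / 2) := by rw [← Real.exp_add]; congr 1; ring
  have e0 : Real.exp (-l 0) = Real.exp (l 1 - (l 0 + l 1 + l 2) / 2) *
      Real.exp (l 2 - (l 0 + l 1 + l 2) / 2) := by rw [← Real.exp_add]; congr 1; ring
  rw [e2, e0]; simp only [xF, thetaF]; ring

lemma es12 (l : Fin 3 → ℝ) :
    xF l 1 ^ 2 + Real.exp (-l 2) = xF l 2 ^ 2 + Real.exp (-l 1) := by
  have e2 : Real.exp (-l 2) = Real.exp (l 0 - (l 0 + l 1 + l 2) / 2) *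
      Real.exp (l 1 - (l 0 + l 1 + l 2) / 2) := by rw [← Real.exp_add]; congr 1; ring
  have e1 : Real.exp (-l 1) = Real.exp (l 0 - (l 0 + l 1 + l 2) / 2) *
      Real.exp (l 2 - (l 0 + l 1 + l 2) / 2) := by rw [← Real.exp_add]; congr 1; ring
  rw [e2, e1]; simp only [xF, thetaF]; ring

theorem stmt9 (h : ℝ) (l : Fin 3 → ℝ) (i j : Fin 3) :
    Hmat h l i j = Hmat h l j i := by
  have h3 : ∀ m : Fin 3, m = 0 ∨ m = 1 ∨ m = 2 := by decide
  rcases h3 i with rfl | rfl | rfl <;> rcases h3 j with rfl | rfl | rfl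
  · rfl
  · rw [Hval h l 0 1 _ (dx01 l), Hval h l 1 0 _ (dx10 l),
      show h * xF l 0 ^ 2 + h * Real.exp (-l 1) = h * xF l 1 ^ 2 + h * Real.exp (-l 0) from by
        linear_combination h * es01 l]
    ring
  · rw [Hval h l 0 2 _ (dx02 l), Hval h l 2 0 _ (dx20 l),
      show h * xF l 0 ^ 2 + h * Real.exp (-l 2) = h * xF l 2 ^ 2 + h * Real.exp (-l 0) from by
        linear_combination h * es02 l]
    ring
  · rw [Hval h l 1 0 _ (dx10 l), Hval h l 0 1 _ (dx01 l),
      show h * xF l 1 ^ 2 + h * Real.exp (-l 0) = h * xF l 0 ^ 2 + h * Real.exp (-l 1) from by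
        linear_combination (-h) * es01 l]
    ring
  · rfl
  · rw [Hval h l 1 2 _ (dx12 l), Hval h l 2 1 _ (dx21 l),
      show h * xF l 1 ^ 2 + h * Real.exp (-l 2) = h * xF l 2 ^ 2 + h * Real.exp (-l 1) from by
        linear_combination h * es12 l]
    ring
  · rw [Hval h l 2 0 _ (dx20 l), Hval h l 0 2 _ (dx02 l),
      show h * xF l 2 ^ 2 + h * Real.exp (-l 0) = h * xF l 0 ^ 2 + h * Real.exp (-l 2) from by
        linear_combination (-h) * es02 l]
    ring
  · rw [Hval h l 2 1 _ (dx21 l), Hval h l 1 2 _ (dx12 l),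
      show h * xF l 2 ^ 2 + h * Real.exp (-l 1) = h * xF l 1 ^ 2 + h * Real.exp (-l 2) from by
        linear_combination (-h) * es12 l]
    ring
  · rfl
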